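/- arXiv:1910.02871 — 8 statements merged into one kernel-verified Lean document; each statement's English description precedes it below -/
import Mathlib

section
/- For a stochastic reaction network G, the following are equivalent: (1) G is essential (the state space Z_{≥0}^n is a union of closed communicating classes); (2) for all x ∈ Z_{≥0}^n, either no reaction is active on x, or for every state x' accessible from x, x is also accessible from x'; (3) for every reaction ν → ν' ∈ R, the state ν is accessible from the state ν' under the dynamics of G. -/
/-- A reaction `ν → ν'` is active on `x` iff `ν ≤ x` componentwise. -/
def Active {σ : Type*} (ν x : σ → ℕ) : Prop := ∀ i, ν i ≤ x i

/-- One jump of the CTMC: firing an active reaction `ν → ν'` moves `x` to `x + ν' - ν`. -/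
def Step {σ : Type*} (R : Set ((σ → ℕ) × (σ → ℕ))) (x y : σ → ℕ) : Prop :=
  ∃ r ∈ R, Active r.1 x ∧ ∀ i, y i + r.1 i = x i + r.2 i

/-- `u` is accessible from `x` via a finite sequence of active reactions. -/
def Accessible {σ : Type*} (R : Set ((σ → ℕ) × (σ → ℕ))) : (σ → ℕ) → (σ → ℕ) → Prop :=
  Relation.ReflTransGen (Step R)

/-- An irreducible component (closed communicating class): a nonempty `Γ` such that for
`x ∈ Γ`, `u` is accessible from `x` iff `u ∈ Γ`. -/
def IsIrreducibleComponent {σ : Type*} (R : Set ((σ → ℕ) × (σ → ℕ)))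
    (Γ : Set (σ → ℕ)) : Prop :=
  Γ.Nonempty ∧ ∀ x ∈ Γ, ∀ u, Accessible R x u ↔ u ∈ Γ

/-- A network is essential if the whole state space is a union of closed communicating
classes. -/
def Essential {σ : Type*} (R : Set ((σ → ℕ) × (σ → ℕ))) : Prop :=
  ∀ x : σ → ℕ, ∃ Γ, IsIrreducibleComponent R Γ ∧ x ∈ Γ

/-- the three characterizations of essentiality are equivalent. -/
theorem stmt1 {σ : Type*} (R : Set ((σ → ℕ) × (σ → ℕ))) :
    (Essential R ↔
      ∀ x : σ → ℕ, (∀ r ∈ R, ¬ Active r.1 x) ∨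
        ∀ x', Accessible R x x' → Accessible R x' x) ∧
    (Essential R ↔ ∀ r ∈ R, Accessible R r.2 r.1) := by
  have ess_to2 : Essential R → ∀ x : σ → ℕ,
      (∀ r ∈ R, ¬ Active r.1 x) ∨ ∀ x', Accessible R x x' → Accessible R x' x := by
    intro hE x
    right
    intro x' hxx'
    obtain ⟨Γ, ⟨hne, hΓ⟩, hxΓ⟩ := hE x
    have hx'Γ : x' ∈ Γ := (hΓ x hxΓ x').mp hxx'
    exact (hΓ x' hx'Γ x).mpr hxΓ
  have two_to_ess : (∀ x : σ → ℕ,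
      (∀ r ∈ R, ¬ Active r.1 x) ∨ ∀ x', Accessible R x x' → Accessible R x' x) →
      Essential R := by
    intro h2 x
    refine ⟨{u | Accessible R x u}, ⟨⟨x, Relation.ReflTransGen.refl⟩, ?_⟩,
      Relation.ReflTransGen.refl⟩
    intro y hy u
    constructor
    · intro hyu
      exact hy.trans hyu
    · intro hu
      rcases h2 x with hna | hrev
      · -- no active reaction at x: any accessible state equals x
        have hfix : ∀ z, Accessible R x z → z = x := by
          intro z hz
          rcases Relation.ReflTransGen.cases_head hz with h | ⟨b, hstep, _⟩
          · exact h.symm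
          · obtain ⟨r, hr, hact, _⟩ := hstep
            exact absurd hact (hna r hr)
        rw [hfix y hy, hfix u hu]; exact Relation.ReflTransGen.refl
      · exact (hrev y hy).trans hu
  have two_to_three : (∀ x : σ → ℕ,
      (∀ r ∈ R, ¬ Active r.1 x) ∨ ∀ x', Accessible R x x' → Accessible R x' x) →
      ∀ r ∈ R, Accessible R r.2 r.1 := by
    intro h2 r hr
    rcases h2 r.1 with hna | hrev
    · exact absurd (fun i => le_refl _) (hna r hr)
    · exact hrev r.2 (Relation.ReflTransGen.single
        ⟨r, hr, fun i => le_refl _, fun i => by omega⟩)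
  have three_to_two : (∀ r ∈ R, Accessible R r.2 r.1) →
      ∀ x : σ → ℕ, (∀ r ∈ R, ¬ Active r.1 x) ∨
        ∀ x', Accessible R x x' → Accessible R x' x := by
    intro h3
    have step_add : ∀ (a b c : σ → ℕ), Step R a b →
        Step R (fun i => a i + c i) (fun i => b i + c i) := by
      intro a b c ⟨r, hr, hact, heq⟩
      exact ⟨r, hr, fun i => le_trans (hact i) (Nat.le_add_right _ _),
        fun i => by have := heq i; show b i + c i + r.1 i = a i + c i + r.2 i; omega⟩
    have acc_add : ∀ (a b c : σ → ℕ), Accessible R a b →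
        Accessible R (fun i => a i + c i) (fun i => b i + c i) := by
      intro a b c h
      induction h with
      | refl => exact Relation.ReflTransGen.refl
      | tail _ hstep ih => exact ih.tail (step_add _ _ c hstep)
    have step_rev : ∀ a b, Step R a b → Accessible R b a := by
      intro a b ⟨r, hr, hact, heq⟩
      have h := acc_add r.2 r.1 (fun i => a i - r.1 i) (h3 r hr)
      have e1 : (fun i => r.2 i + (a i - r.1 i)) = b := by
        funext i; have := heq i; have := hact i; omega
      have e2 : (fun i => r.1 i + (a i - r.1 i)) = a := by
        funext i; have := hact i; omega
      rwa [e1, e2] at h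
    intro x
    right
    intro x' h
    induction h with
    | refl => exact Relation.ReflTransGen.refl
    | tail _ hstep ih => exact (step_rev _ _ hstep).trans ih
  constructor
  · exact ⟨ess_to2, two_to_ess⟩
  · exact ⟨fun hE => two_to_three (ess_to2 hE), fun h3 => two_to_ess (three_to_two h3)⟩
end

section
/- Every weakly reversible reaction network is essential: if for each reaction ν → ν' there is a directed path in the reaction graph from ν' back to ν, then every state of Z_{≥0}^n lies in a closed communicating class of the mass-action CTMC. -/
lemma pathmove {σ : Type*} (R : Set ((σ → ℕ) × (σ → ℕ))) :
    ∀ {c d : σ → ℕ}, Relation.ReflTransGen (fun a b : σ → ℕ => (a, b) ∈ R) c d →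
    ∀ z : σ → ℕ, (∀ i, c i ≤ z i) → ∀ w, (∀ i, w i + c i = z i + d i) →
    Accessible R z w := by
  intro c d h
  induction h using Relation.ReflTransGen.head_induction_on with
  | refl =>
    intro z hz w hw
    have : w = z := funext fun i => by have := hw i; omega
    rw [this]; exact Relation.ReflTransGen.refl
  | @head a b hab hbd ih =>
    intro z hz w hw
    set w' : σ → ℕ := fun i => z i + b i - a i with hw'def
    have hstep : Step R z w' :=
      ⟨(a, b), hab, hz, fun i => by have := hz i; simp only [hw'def]; omega⟩
    have hzb : ∀ i, b i ≤ w' i := fun i => by have := hz i; simp only [hw'def]; omega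
    have hww : ∀ i, w i + b i = w' i + d i := fun i => by
      have h1 := hw i; have h2 := hz i; simp only [hw'def]; omega
    exact Relation.ReflTransGen.head hstep (ih w' hzb w hww)

lemma step_rev {σ : Type*} (R : Set ((σ → ℕ) × (σ → ℕ)))
    (hwr : ∀ r ∈ R, Relation.ReflTransGen (fun a b : σ → ℕ => (a, b) ∈ R) r.2 r.1)
    {x y : σ → ℕ} (h : Step R x y) : Accessible R y x := by
  obtain ⟨r, hr, hact, heq⟩ := h
  have hy2 : ∀ i, r.2 i ≤ y i := fun i => by have := hact i; have := heq i; omega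
  exact pathmove R (hwr r hr) y hy2 x (fun i => by have := heq i; omega)

lemma acc_symm {σ : Type*} (R : Set ((σ → ℕ) × (σ → ℕ)))
    (hwr : ∀ r ∈ R, Relation.ReflTransGen (fun a b : σ → ℕ => (a, b) ∈ R) r.2 r.1)
    {x y : σ → ℕ} (h : Accessible R x y) : Accessible R y x := by
  induction h with
  | refl => exact Relation.ReflTransGen.refl
  | tail _ hstep ih => exact (step_rev R hwr hstep).trans ih

/-- every weakly reversible reaction network is essential. -/
theorem stmt2 {σ : Type*} (R : Set ((σ → ℕ) × (σ → ℕ)))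
    (hwr : ∀ r ∈ R, Relation.ReflTransGen (fun a b : σ → ℕ => (a, b) ∈ R) r.2 r.1) :
    Essential R := by
  intro x
  refine ⟨{u | Accessible R x u}, ⟨⟨x, Relation.ReflTransGen.refl⟩, ?_⟩,
    Relation.ReflTransGen.refl⟩
  intro z hz u
  exact ⟨fun h => hz.trans h, fun h => (acc_symm R hwr hz).trans h⟩
end

section
/- If G₁ and G₂ are both essential reaction networks, then their union G = G₁ ∪ G₂ is essential. -/
/-- Zero-padding embedding of a state on species `S` into the full species set. -/
def pad {ι : Type*} [DecidableEq ι] (S : Finset ι) (v : ↥S → ℕ) : ι → ℕ :=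
  fun i => if h : i ∈ S then v ⟨i, h⟩ else 0

/-- Coordinate projection onto the species of `S`. -/
def proj {ι : Type*} (S : Finset ι) (x : ι → ℕ) : ↥S → ℕ := fun i => x ↑i

/-- The reactions of a subnetwork on species `S`, embedded (by zero-padding) as reactions
on the full species set. -/
def padR {ι : Type*} [DecidableEq ι] (S : Finset ι) (R : Set ((↥S → ℕ) × (↥S → ℕ))) :
    Set ((ι → ℕ) × (ι → ℕ)) := (fun r => (pad S r.1, pad S r.2)) '' R

lemma accessible_mono {σ : Type*} {R R' : Set ((σ → ℕ) × (σ → ℕ))} (h : R ⊆ R')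
    {x y : σ → ℕ} (hxy : Accessible R x y) : Accessible R' x y :=
  Relation.ReflTransGen.mono (r := Step R) (p := Step R') (fun _ _ ⟨r, hr, ha, he⟩ => ⟨r, h hr, ha, he⟩) _ _ hxy

lemma essential_of_symm {σ : Type*} {R : Set ((σ → ℕ) × (σ → ℕ))}
    (hs : ∀ x y, Accessible R x y → Accessible R y x) : Essential R := by
  intro x
  refine ⟨{u | Accessible R x u}, ⟨⟨x, Relation.ReflTransGen.refl⟩, ?_⟩,
    Relation.ReflTransGen.refl⟩
  intro z hz u
  exact ⟨fun hzu => hz.trans hzu, fun hu => (hs x z hz).trans hu⟩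

lemma symm_of_essential {σ : Type*} {R : Set ((σ → ℕ) × (σ → ℕ))}
    (h : Essential R) : ∀ x y, Accessible R x y → Accessible R y x := by
  intro x y hxy
  obtain ⟨Γ, hΓ, hx⟩ := h x
  exact (hΓ.2 y ((hΓ.2 x hx y).mp hxy) x).mpr hx

lemma step_proj {ι : Type*} [DecidableEq ι] {S : Finset ι}
    {R : Set ((↥S → ℕ) × (↥S → ℕ))} {x y : ι → ℕ}
    (h : Step (padR S R) x y) :
    Step R (proj S x) (proj S y) ∧ ∀ i ∉ S, y i = x i := by
  obtain ⟨r, ⟨r₀, hr₀, hpad⟩, ha, he⟩ := h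
  subst hpad
  constructor
  · refine ⟨r₀, hr₀, ?_, ?_⟩
    · intro i
      have := ha (i : ι)
      simpa [pad, i.2, proj] using this
    · intro i
      have := he (i : ι)
      simpa [pad, i.2, proj] using this
  · intro i hi
    have := he i
    simpa [pad, hi] using this

lemma step_lift {ι : Type*} [DecidableEq ι] {S : Finset ι}
    {R : Set ((↥S → ℕ) × (↥S → ℕ))} {v w : ↥S → ℕ}
    (h : Step R v w) (z : ι → ℕ) (hz : proj S z = v) :
    ∃ z', Step (padR S R) z z' ∧ proj S z' = w ∧ ∀ i ∉ S, z' i = z i := by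
  obtain ⟨r, hr, ha, he⟩ := h
  refine ⟨fun i => if h : i ∈ S then w ⟨i, h⟩ else z i,
    ⟨(pad S r.1, pad S r.2), ⟨r, hr, rfl⟩, ?_, ?_⟩, ?_, ?_⟩
  · intro i
    by_cases hi : i ∈ S
    · have hzv : z i = v ⟨i, hi⟩ := congrFun hz ⟨i, hi⟩
      simpa [pad, hi, hzv] using ha ⟨i, hi⟩
    · simp [pad, hi]
  · intro i
    by_cases hi : i ∈ S
    · have hzv : z i = v ⟨i, hi⟩ := congrFun hz ⟨i, hi⟩
      simpa [pad, hi, hzv] using he ⟨i, hi⟩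
    · simp [pad, hi]
  · funext i
    simp [proj, i.2]
  · intro i hi
    simp [hi]

lemma accessible_lift {ι : Type*} [DecidableEq ι] {S : Finset ι}
    {R : Set ((↥S → ℕ) × (↥S → ℕ))} {v w : ↥S → ℕ}
    (h : Accessible R v w) : ∀ z : ι → ℕ, proj S z = v →
      ∃ z', Accessible (padR S R) z z' ∧ proj S z' = w ∧ ∀ i ∉ S, z' i = z i := by
  induction h with
  | refl => exact fun z hz => ⟨z, Relation.ReflTransGen.refl, hz, fun _ _ => rfl⟩
  | tail _ hbc ih =>
    intro z hz
    obtain ⟨z', hacc, hproj, hoff⟩ := ih z hz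
    obtain ⟨z'', hstep, hproj', hoff'⟩ := step_lift hbc z' hproj
    exact ⟨z'', hacc.tail hstep, hproj', fun i hi => (hoff' i hi).trans (hoff i hi)⟩

lemma rev_of_essential {ι : Type*} [DecidableEq ι] {S : Finset ι}
    {R : Set ((↥S → ℕ) × (↥S → ℕ))} (hE : Essential R)
    {x y : ι → ℕ} (h : Step (padR S R) x y) : Accessible (padR S R) y x := by
  obtain ⟨hstep, hoff⟩ := step_proj h
  have hback := symm_of_essential hE _ _ (Relation.ReflTransGen.single hstep)
  obtain ⟨z', hacc, hproj, hoff'⟩ := accessible_lift hback y rfl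
  have hzx : z' = x := by
    funext i
    by_cases hi : i ∈ S
    · exact congrFun hproj ⟨i, hi⟩
    · rw [hoff' i hi, hoff i hi]
  rwa [hzx] at hacc

/-- the union of two essential reaction networks is essential. -/
theorem stmt4 {ι : Type*} [Fintype ι] [DecidableEq ι] (S₁ S₂ : Finset ι)
    (hcov : S₁ ∪ S₂ = Finset.univ)
    (R₁ : Set ((↥S₁ → ℕ) × (↥S₁ → ℕ))) (R₂ : Set ((↥S₂ → ℕ) × (↥S₂ → ℕ)))
    (h₁ : Essential R₁) (h₂ : Essential R₂) :
    Essential (padR S₁ R₁ ∪ padR S₂ R₂) := by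
  apply essential_of_symm
  intro x y h
  induction h with
  | refl => exact Relation.ReflTransGen.refl
  | tail _ hbc ih =>
    refine Relation.ReflTransGen.trans ?_ ih
    obtain ⟨r, hr, ha, he⟩ := hbc
    rcases hr with hr | hr
    · exact accessible_mono Set.subset_union_left
        (rev_of_essential h₁ ⟨r, hr, ha, he⟩)
    · exact accessible_mono Set.subset_union_right
        (rev_of_essential h₂ ⟨r, hr, ha, he⟩)
end

section
/- Let G = G₁ ∪ G₂ be a union of reaction networks, let Γ be an irreducible component of G, and suppose p₁(Γ) is a disjoint union of irreducible components of G₁. If x ∈ Γ and x' ∈ Z_{≥0}^{S₁∪S₂} are such that p₁(x') →_{G₁} p₁(x) but p₁(x) ↛_{G₁} p₁(x'), then x' ∉ Γ. -/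
/-- if `p₁(Γ)` is a disjoint union of irreducible components of `G₁`, and
`p₁(x') →_{G₁} p₁(x)` but not conversely for some `x ∈ Γ`, then `x' ∉ Γ`. -/
theorem stmt5 {ι : Type*} [Fintype ι] [DecidableEq ι] (S₁ S₂ : Finset ι)
    (hcov : S₁ ∪ S₂ = Finset.univ)
    (R₁ : Set ((↥S₁ → ℕ) × (↥S₁ → ℕ))) (R₂ : Set ((↥S₂ → ℕ) × (↥S₂ → ℕ)))
    (Γ : Set (ι → ℕ)) (hΓ : IsIrreducibleComponent (padR S₁ R₁ ∪ padR S₂ R₂) Γ)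
    (𝒞 : Set (Set (↥S₁ → ℕ))) (h𝒞 : ∀ C ∈ 𝒞, IsIrreducibleComponent R₁ C)
    (h𝒞disj : 𝒞.PairwiseDisjoint id) (h𝒞cov : ⋃₀ 𝒞 = proj S₁ '' Γ)
    (x x' : ι → ℕ) (hx : x ∈ Γ)
    (hacc : Accessible R₁ (proj S₁ x') (proj S₁ x))
    (hnacc : ¬ Accessible R₁ (proj S₁ x) (proj S₁ x')) :
    x' ∉ Γ := by
  intro hx'
  have hmem : proj S₁ x' ∈ ⋃₀ 𝒞 := by
    rw [h𝒞cov]; exact ⟨x', hx', rfl⟩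
  obtain ⟨C, hC𝒞, hxC⟩ := hmem
  have hC := h𝒞 C hC𝒞
  have hxinC : proj S₁ x ∈ C := (hC.2 _ hxC _).mp hacc
  exact hnacc ((hC.2 _ hxinC _).mpr hxC)
end

section
/- Let G = G₁ ∪ G₂ with S₁ ∩ S₂ = ∅, let Γ = Γ₁ × Γ₂ be an irreducible component of G with Γᵢ an irreducible component of Gᵢ, and let π₁, π₂ be stationary distributions of G₁, G₂ on Γ₁, Γ₂. Then the product π(x) = π₁(p₁(x)) π₂(p₂(x)) is a stationary distribution of G on Γ, and it is generalized balanced with respect to the partition {(R₁,R₁),(R₂,R₂)}. -/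
/-- One jump of the CTMC on the nonnegative orthant of `ℤ^σ`: from a nonnegative state
`x`, an active reaction `ν → ν'` moves `x` to `x + ν' - ν`. -/
def StepZ {σ : Type*} (R : Finset ((σ → ℤ) × (σ → ℤ))) (x y : σ → ℤ) : Prop :=
  (∀ i, 0 ≤ x i) ∧ ∃ r ∈ R, (∀ i, r.1 i ≤ x i) ∧ y = x + r.2 - r.1

/-- Accessibility via finite sequences of active reactions. -/
def AccessibleZ {σ : Type*} (R : Finset ((σ → ℤ) × (σ → ℤ))) :
    (σ → ℤ) → (σ → ℤ) → Prop :=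
  Relation.ReflTransGen (StepZ R)

/-- An irreducible component (closed communicating class). -/
def IsIrreducibleComponentZ {σ : Type*} (R : Finset ((σ → ℤ) × (σ → ℤ)))
    (Γ : Set (σ → ℤ)) : Prop :=
  Γ.Nonempty ∧ ∀ x ∈ Γ, ∀ u, AccessibleZ R x u ↔ u ∈ Γ

/-- A network is essential if every state of the nonnegative orthant lies in a closed
communicating class. -/
def EssentialZ {σ : Type*} (R : Finset ((σ → ℤ) × (σ → ℤ))) : Prop :=
  ∀ x : σ → ℤ, (∀ i, 0 ≤ x i) → ∃ Γ, IsIrreducibleComponentZ R Γ ∧ x ∈ Γ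

/-- The master (stationarity) equation for `π` on `Γ`, restricted to the reactions of
`R`. -/
def MasterEq {σ : Type*} (R : Finset ((σ → ℤ) × (σ → ℤ)))
    (lam : ((σ → ℤ) × (σ → ℤ)) → (σ → ℤ) → ℝ) (Γ : Set (σ → ℤ))
    (π : (σ → ℤ) → ℝ) : Prop :=
  ∀ x ∈ Γ, ∑ r ∈ R, π (x + r.1 - r.2) * lam r (x + r.1 - r.2) = π x * ∑ r ∈ R, lam r x

/-- `π` is a stationary distribution of the network `R` on `Γ`. -/
def IsStationaryDist {σ : Type*} (R : Finset ((σ → ℤ) × (σ → ℤ)))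
    (lam : ((σ → ℤ) × (σ → ℤ)) → (σ → ℤ) → ℝ) (Γ : Set (σ → ℤ))
    (π : (σ → ℤ) → ℝ) : Prop :=
  (∀ z, 0 ≤ π z) ∧ (∀ z ∉ Γ, π z = 0) ∧ (∑' z : Γ, π ↑z = 1) ∧ MasterEq R lam Γ π

/-- Zero-padding embedding of a state on species `S` into the full species set. -/
def padZ {ι : Type*} [DecidableEq ι] (S : Finset ι) (v : ↥S → ℤ) : ι → ℤ :=
  fun i => if h : i ∈ S then v ⟨i, h⟩ else 0

/-- Coordinate projection onto the species of `S`. -/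
def projZ {ι : Type*} (S : Finset ι) (x : ι → ℤ) : ↥S → ℤ := fun i => x ↑i

/-- The reactions of a subnetwork on species `S`, embedded by zero-padding. -/
def padRZ {ι : Type*} [Fintype ι] [DecidableEq ι] (S : Finset ι)
    (R : Finset ((↥S → ℤ) × (↥S → ℤ))) : Finset ((ι → ℤ) × (ι → ℤ)) :=
  R.image (fun r => (padZ S r.1, padZ S r.2))

section helpers
variable {ι : Type*} [DecidableEq ι]

lemma projZ_padZ (S : Finset ι) (v : ↥S → ℤ) : projZ S (padZ S v) = v := by
  funext i; simp [projZ, padZ]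

lemma projZ_padZ_disj {S T : Finset ι} (h : Disjoint S T) (v : ↥T → ℤ) :
    projZ S (padZ T v) = 0 := by
  funext i
  have hi : (i : ι) ∉ T := fun hm => (Finset.disjoint_left.mp h) i.2 hm
  simp [projZ, padZ, hi]

omit [DecidableEq ι] in
lemma projZ_add (S : Finset ι) (x y : ι → ℤ) :
    projZ S (x + y) = projZ S x + projZ S y := rfl

omit [DecidableEq ι] in
lemma projZ_sub (S : Finset ι) (x y : ι → ℤ) :
    projZ S (x - y) = projZ S x - projZ S y := rfl

lemma pad_proj_add {S T : Finset ι} (hdis : Disjoint S T)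
    (hcov : ∀ i, i ∈ S ∨ i ∈ T) (x : ι → ℤ) :
    padZ S (projZ S x) + padZ T (projZ T x) = x := by
  funext i
  rcases hcov i with h1 | h2
  · have h2 : i ∉ T := Finset.disjoint_left.mp hdis h1
    simp [padZ, projZ, Pi.add_apply, h1, h2]
  · have h1 : i ∉ S := Finset.disjoint_right.mp hdis h2
    simp [padZ, projZ, Pi.add_apply, h1, h2]

lemma master_pad [Fintype ι] (S T : Finset ι) (hdis : Disjoint T S)
    (R : Finset ((↥S → ℤ) × (↥S → ℤ)))
    (lam : ((↥S → ℤ) × (↥S → ℤ)) → (↥S → ℤ) → ℝ)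
    (Lam : ((ι → ℤ) × (ι → ℤ)) → (ι → ℤ) → ℝ)
    (hLam : ∀ r ∈ R, ∀ x : ι → ℤ, Lam (padZ S r.1, padZ S r.2) x = lam r (projZ S x))
    (Γ' : Set (↥S → ℤ)) (π : (↥S → ℤ) → ℝ) (hm : MasterEq R lam Γ' π)
    (q : (↥T → ℤ) → ℝ) (Γ : Set (ι → ℤ)) (hΓ : ∀ x ∈ Γ, projZ S x ∈ Γ') :
    MasterEq (padRZ S R) Lam Γ (fun x => π (projZ S x) * q (projZ T x)) := by
  intro x hx
  have hinj : ∀ a ∈ R, ∀ b ∈ R,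
      (fun r : (↥S → ℤ) × (↥S → ℤ) => (padZ S r.1, padZ S r.2)) a =
      (fun r : (↥S → ℤ) × (↥S → ℤ) => (padZ S r.1, padZ S r.2)) b → a = b := by
    intro a _ b _ h
    have h1 := congrArg (fun p => projZ S p.1) h
    have h2 := congrArg (fun p => projZ S p.2) h
    simp only [projZ_padZ] at h1 h2
    exact Prod.ext h1 h2
  rw [padRZ, Finset.sum_image hinj, Finset.sum_image hinj]
  have key : ∀ r ∈ R,
      projZ S (x + padZ S r.1 - padZ S r.2) = projZ S x + r.1 - r.2 ∧
      projZ T (x + padZ S r.1 - padZ S r.2) = projZ T x := by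
    intro r _
    constructor
    · rw [projZ_sub, projZ_add, projZ_padZ, projZ_padZ]
    · rw [projZ_sub, projZ_add, projZ_padZ_disj hdis, projZ_padZ_disj hdis]
      ring
  calc ∑ r ∈ R, π (projZ S (x + padZ S r.1 - padZ S r.2)) *
          q (projZ T (x + padZ S r.1 - padZ S r.2)) *
          Lam (padZ S r.1, padZ S r.2) (x + padZ S r.1 - padZ S r.2)
      = ∑ r ∈ R, q (projZ T x) *
          (π (projZ S x + r.1 - r.2) * lam r (projZ S x + r.1 - r.2)) := by
        apply Finset.sum_congr rfl
        intro r hr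
        rw [(key r hr).1, (key r hr).2, hLam r hr, (key r hr).1]
        ring
    _ = q (projZ T x) * (π (projZ S x) * ∑ r ∈ R, lam r (projZ S x)) := by
        rw [← Finset.mul_sum, hm (projZ S x) (hΓ x hx)]
    _ = π (projZ S x) * q (projZ T x) * ∑ r ∈ R, Lam (padZ S r.1, padZ S r.2) x := by
        rw [Finset.sum_congr rfl (fun r hr => hLam r hr x)]
        ring

omit [DecidableEq ι] in
/-- Master equations for two reaction sets combine to one for the union, provided
all common reactions are trivial. -/
lemma master_union {A B : Finset ((ι → ℤ) × (ι → ℤ))}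
    [DecidableEq ((ι → ℤ) × (ι → ℤ))]
    {Lam : ((ι → ℤ) × (ι → ℤ)) → (ι → ℤ) → ℝ} {Γ : Set (ι → ℤ)} {π : (ι → ℤ) → ℝ}
    (hint : ∀ r ∈ A ∩ B, r.1 = 0 ∧ r.2 = 0)
    (hA : MasterEq A Lam Γ π) (hB : MasterEq B Lam Γ π) :
    MasterEq (A ∪ B) Lam Γ π := by
  intro x hx
  have h₁ := hA x hx
  have h₂ := hB x hx
  have hC : ∑ r ∈ A ∩ B, π (x + r.1 - r.2) * Lam r (x + r.1 - r.2) =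
      π x * ∑ r ∈ A ∩ B, Lam r x := by
    rw [Finset.mul_sum]
    refine Finset.sum_congr rfl fun r hr => ?_
    obtain ⟨e1, e2⟩ := hint r hr
    rw [e1, e2]
    simp
  have hsum := Finset.sum_union_inter (s₁ := A) (s₂ := B)
    (f := fun r => π (x + r.1 - r.2) * Lam r (x + r.1 - r.2))
  have hsum' := Finset.sum_union_inter (s₁ := A) (s₂ := B) (f := fun r => Lam r x)
  have hU : ∑ r ∈ A ∪ B, Lam r x =
      (∑ r ∈ A, Lam r x) + (∑ r ∈ B, Lam r x) - ∑ r ∈ A ∩ B, Lam r x := by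
    linarith
  rw [hU]
  have : ∑ r ∈ A ∪ B, π (x + r.1 - r.2) * Lam r (x + r.1 - r.2) =
      π x * (∑ r ∈ A, Lam r x) + π x * (∑ r ∈ B, Lam r x) -
        π x * ∑ r ∈ A ∩ B, Lam r x := by
    linarith
  rw [this]; ring

set_option maxHeartbeats 1000000 in
/-- The normalization of the product measure on the product component. -/
lemma tsum_prod_one [Fintype ι] {S₁ S₂ : Finset ι}
    (hdis : Disjoint S₁ S₂) (hcov : S₁ ∪ S₂ = Finset.univ)
    {Γ₁ : Set (↥S₁ → ℤ)} {Γ₂ : Set (↥S₂ → ℤ)}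
    {π₁ : (↥S₁ → ℤ) → ℝ} {π₂ : (↥S₂ → ℤ) → ℝ}
    (hnn₁ : ∀ z, 0 ≤ π₁ z) (hnn₂ : ∀ z, 0 ≤ π₂ z)
    (hs₁ : (∑' z : Γ₁, π₁ ↑z) = 1) (hs₂ : (∑' z : Γ₂, π₂ ↑z) = 1) :
    (∑' z : {x : ι → ℤ | projZ S₁ x ∈ Γ₁ ∧ projZ S₂ x ∈ Γ₂},
      π₁ (projZ S₁ ↑z) * π₂ (projZ S₂ ↑z)) = 1 := by
  have hcov' : ∀ i, i ∈ S₁ ∨ i ∈ S₂ := by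
    intro i
    have : i ∈ S₁ ∪ S₂ := by rw [hcov]; exact Finset.mem_univ i
    exact Finset.mem_union.mp this
  have sum₁ : Summable (fun a : Γ₁ => π₁ ↑a) := by
    by_contra h; rw [tsum_eq_zero_of_not_summable h] at hs₁; norm_num at hs₁
  have sum₂ : Summable (fun a : Γ₂ => π₂ ↑a) := by
    by_contra h; rw [tsum_eq_zero_of_not_summable h] at hs₂; norm_num at hs₂
  have hn₁ : Summable (fun a : Γ₁ => ‖π₁ ↑a‖) := by
    have he : (fun a : Γ₁ => ‖π₁ ↑a‖) = fun a : Γ₁ => π₁ ↑a :=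
      funext fun a => Real.norm_of_nonneg (hnn₁ _)
    rw [he]; exact sum₁
  have hn₂ : Summable (fun a : Γ₂ => ‖π₂ ↑a‖) := by
    have he : (fun a : Γ₂ => ‖π₂ ↑a‖) = fun a : Γ₂ => π₂ ↑a :=
      funext fun a => Real.norm_of_nonneg (hnn₂ _)
    rw [he]; exact sum₂
  have hprod : Summable (fun p : ↥Γ₁ × ↥Γ₂ => π₁ ↑p.1 * π₂ ↑p.2) :=
    summable_mul_of_summable_norm hn₁ hn₂
  let e : ↥Γ₁ × ↥Γ₂ ≃ ↥{x : ι → ℤ | projZ S₁ x ∈ Γ₁ ∧ projZ S₂ x ∈ Γ₂} :=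
    { toFun := fun p => ⟨padZ S₁ ↑p.1 + padZ S₂ ↑p.2, by
        constructor
        · rw [projZ_add, projZ_padZ, projZ_padZ_disj hdis]
          simpa using p.1.2
        · rw [projZ_add, projZ_padZ, projZ_padZ_disj hdis.symm]
          simpa using p.2.2⟩
      invFun := fun z => (⟨projZ S₁ ↑z, z.2.1⟩, ⟨projZ S₂ ↑z, z.2.2⟩)
      left_inv := by
        rintro ⟨a, b⟩
        refine Prod.ext (Subtype.ext ?_) (Subtype.ext ?_)
        · show projZ S₁ (padZ S₁ ↑a + padZ S₂ ↑b) = ↑a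
          rw [projZ_add, projZ_padZ, projZ_padZ_disj hdis]; simp
        · show projZ S₂ (padZ S₁ ↑a + padZ S₂ ↑b) = ↑b
          rw [projZ_add, projZ_padZ, projZ_padZ_disj hdis.symm]; simp
      right_inv := fun z => Subtype.ext (pad_proj_add hdis hcov' ↑z) }
  rw [← Equiv.tsum_eq e (fun z => π₁ (projZ S₁ ↑z) * π₂ (projZ S₂ ↑z))]
  have hcong : ∀ p : ↥Γ₁ × ↥Γ₂,
      π₁ (projZ S₁ ↑(e p)) * π₂ (projZ S₂ ↑(e p)) = π₁ ↑p.1 * π₂ ↑p.2 := by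
    intro p
    show π₁ (projZ S₁ (padZ S₁ ↑p.1 + padZ S₂ ↑p.2)) *
      π₂ (projZ S₂ (padZ S₁ ↑p.1 + padZ S₂ ↑p.2)) = _
    rw [projZ_add, projZ_add, projZ_padZ, projZ_padZ,
      projZ_padZ_disj hdis, projZ_padZ_disj hdis.symm]
    simp
  rw [tsum_congr hcong, ← Summable.tsum_mul_tsum sum₁ sum₂ hprod, hs₁, hs₂]
  norm_num
end helpers
/-- for a union with disjoint species sets, the product of stationary
distributions on `Γ₁ × Γ₂` is a stationary distribution of the union, generalized
balanced with respect to `{(R₁,R₁),(R₂,R₂)}`. -/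
theorem stmt9 {ι : Type*} [Fintype ι] [DecidableEq ι] (S₁ S₂ : Finset ι)
    (hdis : Disjoint S₁ S₂) (hcov : S₁ ∪ S₂ = Finset.univ)
    (R₁ : Finset ((↥S₁ → ℤ) × (↥S₁ → ℤ))) (R₂ : Finset ((↥S₂ → ℤ) × (↥S₂ → ℤ)))
    (hR₁nn : ∀ r ∈ R₁, ∀ i, 0 ≤ r.1 i ∧ 0 ≤ r.2 i)
    (hR₂nn : ∀ r ∈ R₂, ∀ i, 0 ≤ r.1 i ∧ 0 ≤ r.2 i)
    (lam₁ : ((↥S₁ → ℤ) × (↥S₁ → ℤ)) → (↥S₁ → ℤ) → ℝ)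
    (lam₂ : ((↥S₂ → ℤ) × (↥S₂ → ℤ)) → (↥S₂ → ℤ) → ℝ)
    (Lam : ((ι → ℤ) × (ι → ℤ)) → (ι → ℤ) → ℝ)
    -- intensities of the union depend only on the coordinates of the reactant's network
    (hLam₁ : ∀ r ∈ R₁, ∀ x : ι → ℤ, Lam (padZ S₁ r.1, padZ S₁ r.2) x = lam₁ r (projZ S₁ x))
    (hLam₂ : ∀ r ∈ R₂, ∀ x : ι → ℤ, Lam (padZ S₂ r.1, padZ S₂ r.2) x = lam₂ r (projZ S₂ x))
    (Γ₁ : Set (↥S₁ → ℤ)) (Γ₂ : Set (↥S₂ → ℤ))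
    (hΓ₁ : IsIrreducibleComponentZ R₁ Γ₁) (hΓ₂ : IsIrreducibleComponentZ R₂ Γ₂)
    (π₁ : (↥S₁ → ℤ) → ℝ) (π₂ : (↥S₂ → ℤ) → ℝ)
    (hπ₁ : IsStationaryDist R₁ lam₁ Γ₁ π₁) (hπ₂ : IsStationaryDist R₂ lam₂ Γ₂ π₂)
    (Γ : Set (ι → ℤ)) (hΓdef : Γ = {x | projZ S₁ x ∈ Γ₁ ∧ projZ S₂ x ∈ Γ₂})
    (hΓ : IsIrreducibleComponentZ (padRZ S₁ R₁ ∪ padRZ S₂ R₂) Γ) :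
    IsStationaryDist (padRZ S₁ R₁ ∪ padRZ S₂ R₂) Lam Γ
      (fun x => π₁ (projZ S₁ x) * π₂ (projZ S₂ x)) ∧
    MasterEq (padRZ S₁ R₁) Lam Γ (fun x => π₁ (projZ S₁ x) * π₂ (projZ S₂ x)) ∧
    MasterEq (padRZ S₂ R₂) Lam Γ (fun x => π₁ (projZ S₁ x) * π₂ (projZ S₂ x)) := by
  obtain ⟨hnn₁, hz₁, hs₁, hm₁⟩ := hπ₁
  obtain ⟨hnn₂, hz₂, hs₂, hm₂⟩ := hπ₂
  have M₁ : MasterEq (padRZ S₁ R₁) Lam Γ (fun x => π₁ (projZ S₁ x) * π₂ (projZ S₂ x)) :=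
    master_pad S₁ S₂ hdis.symm R₁ lam₁ Lam hLam₁ Γ₁ π₁ hm₁ π₂ Γ
      (fun x hx => by rw [hΓdef] at hx; exact hx.1)
  have M₂ : MasterEq (padRZ S₂ R₂) Lam Γ (fun x => π₁ (projZ S₁ x) * π₂ (projZ S₂ x)) := by
    have h := master_pad S₂ S₁ hdis R₂ lam₂ Lam hLam₂ Γ₂ π₂ hm₂ π₁ Γ
      (fun x hx => by rw [hΓdef] at hx; exact hx.2)
    have he : (fun x : ι → ℤ => π₂ (projZ S₂ x) * π₁ (projZ S₁ x)) =
        (fun x => π₁ (projZ S₁ x) * π₂ (projZ S₂ x)) := by funext x; ring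
    rwa [he] at h
  have hvan : ∀ (u : ↥S₁ → ℤ) (v : ↥S₂ → ℤ), padZ S₁ u = padZ S₂ v → padZ S₁ u = 0 := by
    intro u v h; funext i
    by_cases hi : i ∈ S₁
    · have hi2 : i ∉ S₂ := Finset.disjoint_left.mp hdis hi
      have hfi := congrFun h i
      simp only [padZ, dif_pos hi, dif_neg hi2] at hfi
      simpa [padZ, hi] using hfi
    · simp [padZ, hi]
  have hint : ∀ r ∈ padRZ S₁ R₁ ∩ padRZ S₂ R₂, r.1 = 0 ∧ r.2 = 0 := by
    intro r hr
    rw [Finset.mem_inter] at hr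
    obtain ⟨a, _, hae⟩ := Finset.mem_image.mp hr.1
    obtain ⟨b, _, hbe⟩ := Finset.mem_image.mp hr.2
    have h1 : padZ S₁ a.1 = padZ S₂ b.1 := by
      rw [show padZ S₁ a.1 = r.1 from congrArg Prod.fst hae,
        show padZ S₂ b.1 = r.1 from congrArg Prod.fst hbe]
    have h2 : padZ S₁ a.2 = padZ S₂ b.2 := by
      rw [show padZ S₁ a.2 = r.2 from congrArg Prod.snd hae,
        show padZ S₂ b.2 = r.2 from congrArg Prod.snd hbe]
    constructor
    · rw [← congrArg Prod.fst hae]; exact hvan _ _ h1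
    · rw [← congrArg Prod.snd hae]; exact hvan _ _ h2
  refine ⟨⟨fun z => mul_nonneg (hnn₁ _) (hnn₂ _), ?_, ?_, master_union hint M₁ M₂⟩, M₁, M₂⟩
  · intro z hz
    rw [hΓdef] at hz
    rcases not_and_or.mp hz with h | h
    · simp [hz₁ _ h]
    · simp [hz₂ _ h]
  · rw [hΓdef]
    exact tsum_prod_one hdis hcov hnn₁ hnn₂ hs₁ hs₂
end

section
/- Consider the mass-action reaction network G₁ on species S₁, S₂ with reactions S₁ ⇌ S₂ (rates κ₁, κ₂) and 2S₁ ⇌ S₁+S₂ (rates κ₃, κ₄), all rate constants positive. On each irreducible component Γ_N = {(x₁,x₂) ∈ Z_{≥0}² : x₁+x₂ = N}, the distribution π(x₁,x₂) = Z⁻¹ f₁(x₁) f₂(x₂) with f₁(x₁) = (1/x₁!) ∏_{l=1}^{x₁} (κ₂+κ₄(l−1))/(κ₁+κ₃(l−1)) and f₂(x₂) = 1/x₂! satisfies both reaction-vector balance equations π(x₁+1,x₂−1)(x₁+1)(κ₁+κ₃x₁) = π(x₁,x₂) x₂(κ₂+κ₄x₁) and π(x₁−1,x₂+1)(x₂+1)(κ₂+κ₄(x₁−1))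 = π(x₁,x₂) x₁(κ₁+κ₃(x₁−1)) for all (x₁,x₂) ∈ Γ_N, and hence is the stationary distribution on Γ_N. -/
/-- for the mass-action network `S₁ ⇌ S₂`, `2S₁ ⇌ S₁+S₂`, the product-form
distribution with `f₁(x₁) = (1/x₁!) ∏_{l=1}^{x₁} (κ₂+κ₄(l-1))/(κ₁+κ₃(l-1))` and
`f₂(x₂) = 1/x₂!` satisfies both reaction-vector balance equations on
`Γ_N = {x₁ + x₂ = N}` and hence the master equation, so it is the stationary
distribution on `Γ_N`. -/
theorem stmt13 (κ₁ κ₂ κ₃ κ₄ : ℝ) (h₁ : 0 < κ₁) (h₂ : 0 < κ₂) (h₃ : 0 < κ₃) (h₄ : 0 < κ₄)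
    (N : ℕ)
    (f₁ f₂ : ℕ → ℝ)
    (hf₁ : ∀ m : ℕ, f₁ m = (1 / (m.factorial : ℝ)) *
      ∏ l ∈ Finset.range m, (κ₂ + κ₄ * l) / (κ₁ + κ₃ * l))
    (hf₂ : ∀ m : ℕ, f₂ m = 1 / (m.factorial : ℝ))
    (Z : ℝ) (hZ : Z = ∑ p ∈ Finset.range (N + 1), f₁ p * f₂ (N - p))
    (π : ℤ → ℤ → ℝ)
    (hπ : ∀ a b : ℤ, π a b =
      if 0 ≤ a ∧ 0 ≤ b then Z⁻¹ * f₁ a.toNat * f₂ b.toNat else 0) :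
    (∀ a b : ℤ, 0 ≤ a → 0 ≤ b → a + b = (N : ℤ) →
      -- reaction-vector balance for the net change (-1, +1)
      (π (a + 1) (b - 1) * (((a : ℝ) + 1) * (κ₁ + κ₃ * a)) =
        π a b * ((b : ℝ) * (κ₂ + κ₄ * a))) ∧
      -- reaction-vector balance for the net change (+1, -1)
      (π (a - 1) (b + 1) * (((b : ℝ) + 1) * (κ₂ + κ₄ * ((a : ℝ) - 1))) =
        π a b * ((a : ℝ) * (κ₁ + κ₃ * ((a : ℝ) - 1)))) ∧
      -- hence the master equation holds at (a, b)
      (π (a + 1) (b - 1) * (κ₁ * ((a : ℝ) + 1) + κ₃ * (((a : ℝ) + 1) * a)) +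
        π (a - 1) (b + 1) * (κ₂ * ((b : ℝ) + 1) + κ₄ * (((a : ℝ) - 1) * ((b : ℝ) + 1))) =
        π a b * (κ₁ * a + κ₃ * ((a : ℝ) * ((a : ℝ) - 1)) + κ₂ * b + κ₄ * ((a : ℝ) * b)))) ∧
    -- π is a probability distribution on Γ_N
    (∑ p ∈ Finset.range (N + 1), π p ((N : ℤ) - p)) = 1 := by
  -- positivity of f₁, f₂
  have hf1_pos : ∀ m : ℕ, 0 < f₁ m := by
    intro m
    rw [hf₁]
    apply mul_pos
    · positivity
    · apply Finset.prod_pos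
      intro l _
      have : (0:ℝ) < κ₂ + κ₄ * l := by positivity
      have : (0:ℝ) < κ₁ + κ₃ * l := by positivity
      positivity
  have hf2_pos : ∀ m : ℕ, 0 < f₂ m := by
    intro m; rw [hf₂]; positivity
  -- recurrences
  have hrec1 : ∀ m : ℕ, ((m:ℝ) + 1) * (κ₁ + κ₃ * m) * f₁ (m + 1) = (κ₂ + κ₄ * m) * f₁ m := by
    intro m
    rw [hf₁ (m+1), hf₁ m, Finset.prod_range_succ, Nat.factorial_succ]
    have hk : (κ₁ + κ₃ * (m:ℝ)) ≠ 0 := by positivity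
    have hm : ((m.factorial : ℝ)) ≠ 0 := by positivity
    push_cast
    field_simp
  have hrec2 : ∀ m : ℕ, f₂ m = ((m:ℝ) + 1) * f₂ (m + 1) := by
    intro m
    rw [hf₂ m, hf₂ (m+1), Nat.factorial_succ]
    have hm : ((m.factorial : ℝ)) ≠ 0 := by positivity
    push_cast
    field_simp
  -- evaluation of π on nonnegative points
  have hπn : ∀ n k : ℕ, π n k = Z⁻¹ * f₁ n * f₂ k := by
    intro n k
    rw [hπ]
    simp
  have hZpos : 0 < Z := by
    rw [hZ]
    apply Finset.sum_pos
    · intro p _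
      exact mul_pos (hf1_pos p) (hf2_pos (N - p))
    · exact ⟨0, Finset.mem_range.mpr (Nat.succ_pos N)⟩
  constructor
  · intro a b ha hb hab
    obtain ⟨n, rfl⟩ := Int.eq_ofNat_of_zero_le ha
    obtain ⟨k, rfl⟩ := Int.eq_ofNat_of_zero_le hb
    have e1 : π (↑n + 1) (↑k - 1) * (((n:ℝ) + 1) * (κ₁ + κ₃ * n)) =
        π ↑n ↑k * ((k:ℝ) * (κ₂ + κ₄ * n)) := by
      cases k with
      | zero =>
        have h0 : π (↑n + 1) ((0:ℤ) - 1) = 0 := by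
          rw [hπ]; norm_num
        simp only [Nat.cast_zero]
        rw [h0]
        simp
      | succ j =>
        have c1 : ((n:ℤ) + 1) = ((n + 1 : ℕ) : ℤ) := by push_cast; ring
        have c2 : ((j + 1 : ℕ) : ℤ) - 1 = ((j : ℕ) : ℤ) := by push_cast; ring
        rw [c1, c2, hπn, hπn]
        have r1 := hrec1 n
        have r2 := hrec2 j
        push_cast
        linear_combination Z⁻¹ * f₂ j * r1 + Z⁻¹ * (κ₂ + κ₄ * (n:ℝ)) * f₁ n * r2
    have e2 : π (↑n - 1) (↑k + 1) * (((k:ℝ) + 1) * (κ₂ + κ₄ * ((n:ℝ) - 1))) =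
        π ↑n ↑k * ((n:ℝ) * (κ₁ + κ₃ * ((n:ℝ) - 1))) := by
      cases n with
      | zero =>
        have h0 : π ((0:ℤ) - 1) (↑k + 1) = 0 := by
          rw [hπ]; norm_num
        simp only [Nat.cast_zero]
        rw [h0]
        simp
      | succ m =>
        have c1 : ((m + 1 : ℕ) : ℤ) - 1 = ((m : ℕ) : ℤ) := by push_cast; ring
        have c2 : ((k:ℤ) + 1) = ((k + 1 : ℕ) : ℤ) := by push_cast; ring
        rw [c1, c2, hπn, hπn]
        have r1 := hrec1 m
        have r2 := hrec2 k
        push_cast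
        linear_combination (-(Z⁻¹ * f₂ k)) * r1 + (-(Z⁻¹ * (κ₂ + κ₄ * (m:ℝ)) * f₁ m)) * r2
    refine ⟨e1, e2, ?_⟩
    linear_combination e1 + e2
  · have hsum : ∀ p ∈ Finset.range (N + 1), π ↑p ((N:ℤ) - ↑p) = Z⁻¹ * (f₁ p * f₂ (N - p)) := by
      intro p hp
      have hp' : p ≤ N := Nat.lt_succ_iff.mp (Finset.mem_range.mp hp)
      have c : ((N:ℤ) - ↑p) = ((N - p : ℕ) : ℤ) := by
        rw [Int.ofNat_sub hp']
      rw [c, hπn, mul_assoc]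
    rw [Finset.sum_congr rfl hsum, ← Finset.mul_sum, ← hZ]
    field_simp
end

section
/- Consider the mass-action network G₁ with reactions S₁ ⇌ S₂ (rates κ₁,κ₂) and 2S₁ ⇌ S₁+S₂ (rates κ₃,κ₄), joined with G₂: ∅ ⇌ S₂ (rates κ₊, κ₋). With c₂ = κ₊/κ₋, the unnormalized product measure μ(x₁,x₂) = [c₂^{x₁}/x₁! · ∏_{l=1}^{x₁}(κ₂+κ₄(l−1))/(κ₁+κ₃(l−1))] · [c₂^{x₂}/x₂!] is summable over Z_{≥0}² for all positive rate constants, and its normalization is a stationary distribution for the joined network G₁ ∪ G₂ on Z_{≥0}². -/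
/-- for the join of `S₁ ⇌ S₂`, `2S₁ ⇌ S₁+S₂` with `∅ ⇌ S₂`
(rates `κ₊, κ₋`, `c₂ = κ₊/κ₋`), the unnormalized product measure
`μ(x₁,x₂) = [c₂^{x₁}/x₁! ∏_{l=1}^{x₁}(κ₂+κ₄(l-1))/(κ₁+κ₃(l-1))]·[c₂^{x₂}/x₂!]`
is summable over `ℤ_{≥0}²`, and its normalization is a stationary distribution of the
joined network on `ℤ_{≥0}²` (it is a probability and satisfies the master equation). -/
theorem stmt15 (κ₁ κ₂ κ₃ κ₄ κp κm : ℝ)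
    (h₁ : 0 < κ₁) (h₂ : 0 < κ₂) (h₃ : 0 < κ₃) (h₄ : 0 < κ₄)
    (hp : 0 < κp) (hm : 0 < κm)
    (c₂ : ℝ) (hc₂ : c₂ = κp / κm)
    (μ : ℕ × ℕ → ℝ)
    (hμ : ∀ p : ℕ × ℕ, μ p =
      (c₂ ^ p.1 / (p.1.factorial : ℝ) *
        ∏ l ∈ Finset.range p.1, (κ₂ + κ₄ * l) / (κ₁ + κ₃ * l)) *
      (c₂ ^ p.2 / (p.2.factorial : ℝ)))
    (π : ℤ → ℤ → ℝ)
    (hπ : ∀ a b : ℤ, π a b =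
      if 0 ≤ a ∧ 0 ≤ b then μ (a.toNat, b.toNat) / (∑' p : ℕ × ℕ, μ p) else 0) :
    -- summability over the state space
    Summable μ ∧
    -- normalization: π is a probability distribution
    (∑' p : ℕ × ℕ, π p.1 p.2) = 1 ∧
    -- the master equation holds at every state of ℤ_{≥0}²
    (∀ a b : ℤ, 0 ≤ a → 0 ≤ b →
      π (a + 1) (b - 1) * (κ₁ * ((a : ℝ) + 1) + κ₃ * (((a : ℝ) + 1) * a)) +
      π (a - 1) (b + 1) * (κ₂ * ((b : ℝ) + 1) + κ₄ * (((a : ℝ) - 1) * ((b : ℝ) + 1))) +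
      π a (b - 1) * κp +
      π a (b + 1) * (κm * ((b : ℝ) + 1)) =
      π a b * (κ₁ * a + κ₃ * ((a : ℝ) * ((a : ℝ) - 1)) + κ₂ * b + κ₄ * ((a : ℝ) * b) +
        κp + κm * b)) := by
  have hc : 0 < c₂ := by rw [hc₂]; positivity
  set S : ℝ := ∑' p : ℕ × ℕ, μ p with hSdef
  set f : ℕ → ℝ := fun x => c₂ ^ x / (x.factorial : ℝ) *
      ∏ l ∈ Finset.range x, (κ₂ + κ₄ * l) / (κ₁ + κ₃ * l) with hfdef
  set g : ℕ → ℝ := fun y => c₂ ^ y / (y.factorial : ℝ) with hgdef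
  have hμ' : ∀ x y : ℕ, μ (x, y) = f x * g y := by
    intro x y; rw [hμ (x, y)]
  have hfpos : ∀ x, 0 < f x := by
    intro x
    simp only [hfdef]
    apply mul_pos (by positivity)
    exact Finset.prod_pos fun i _ => div_pos (by positivity) (by positivity)
  have hgpos : ∀ y, 0 < g y := by
    intro y; simp only [hgdef]; positivity
  -- summability
  have hratio : ∀ l : ℕ, (κ₂ + κ₄ * l) / (κ₁ + κ₃ * l) ≤ κ₂ / κ₁ + κ₄ / κ₃ := by
    intro l
    rw [div_le_iff₀ (by positivity)]
    have e : (κ₂ / κ₁ + κ₄ / κ₃) * (κ₁ + κ₃ * l)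
        = κ₂ + κ₄ * l + (κ₂ * (κ₃ * l) / κ₁ + κ₄ * κ₁ / κ₃) := by
      field_simp; ring
    rw [e]
    have : (0:ℝ) ≤ κ₂ * (κ₃ * l) / κ₁ + κ₄ * κ₁ / κ₃ := by positivity
    linarith
  have hsf : Summable f := by
    have hbig : Summable (fun x : ℕ => (c₂ * (κ₂ / κ₁ + κ₄ / κ₃)) ^ x / (x.factorial : ℝ)) :=
      Real.summable_pow_div_factorial _
    refine Summable.of_nonneg_of_le (fun x => (hfpos x).le) ?_ hbig
    · intro x
      simp only [hfdef]
      have hb : ∏ l ∈ Finset.range x, (κ₂ + κ₄ * l) / (κ₁ + κ₃ * l)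
          ≤ (κ₂ / κ₁ + κ₄ / κ₃) ^ x := by
        calc ∏ l ∈ Finset.range x, (κ₂ + κ₄ * l) / (κ₁ + κ₃ * l)
            ≤ ∏ l ∈ Finset.range x, (κ₂ / κ₁ + κ₄ / κ₃) :=
              Finset.prod_le_prod (fun i _ => by positivity) (fun i _ => hratio i)
          _ = (κ₂ / κ₁ + κ₄ / κ₃) ^ x := by
              rw [Finset.prod_const, Finset.card_range]
      calc c₂ ^ x / (x.factorial : ℝ) * ∏ l ∈ Finset.range x, (κ₂ + κ₄ * l) / (κ₁ + κ₃ * l)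
          ≤ c₂ ^ x / (x.factorial : ℝ) * (κ₂ / κ₁ + κ₄ / κ₃) ^ x :=
            mul_le_mul_of_nonneg_left hb (by positivity)
        _ = (c₂ * (κ₂ / κ₁ + κ₄ / κ₃)) ^ x / (x.factorial : ℝ) := by
            rw [mul_pow]; ring
  have hsg : Summable g := by
    simp only [hgdef]
    exact Real.summable_pow_div_factorial _
  have hsum : Summable μ := by
    have : μ = fun p : ℕ × ℕ => f p.1 * g p.2 := funext fun p => hμ p
    rw [this]
    exact hsf.mul_of_nonneg hsg (fun x => (hfpos x).le) (fun y => (hgpos y).le)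
  have hS0 : S ≠ 0 := by
    have h00 : μ (0, 0) = 1 := by rw [hμ (0,0)]; simp
    have hnn : ∀ p : ℕ × ℕ, 0 ≤ μ p := by
      rintro ⟨x, y⟩
      rw [hμ' x y]
      exact mul_nonneg (hfpos _).le (hgpos _).le
    have hle : μ (0, 0) ≤ S := Summable.le_tsum hsum (0, 0) (fun p _ => hnn p)
    rw [h00] at hle; linarith
  have hπN : ∀ x y : ℕ, π x y = f x * g y / S := by
    intro x y
    rw [hπ]
    simp [Int.toNat_natCast, Int.natCast_nonneg, hμ' x y]
  have hπx : ∀ x : ℤ, π x (-1) = 0 := by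
    intro x; rw [hπ]; norm_num
  have hπy : ∀ y : ℤ, π (-1) y = 0 := by
    intro y; rw [hπ]; norm_num
  have hfacne : ∀ x : ℕ, ((x.factorial : ℝ)) ≠ 0 :=
    fun x => Nat.cast_ne_zero.mpr x.factorial_ne_zero
  have hfrec : ∀ x : ℕ, f (x+1) * (((x:ℝ)+1) * (κ₁ + κ₃ * x)) = f x * (c₂ * (κ₂ + κ₄ * x)) := by
    intro x
    simp only [hfdef, Finset.prod_range_succ, Nat.factorial_succ, Nat.cast_mul,
      Nat.cast_add, Nat.cast_one, pow_succ]
    have h5 : (κ₁ + κ₃ * x) ≠ 0 := by positivity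
    field_simp
    ring
    exact Finset.prod_congr rfl (fun i _ => by ring)
  have hgrec : ∀ y : ℕ, g (y+1) * ((y:ℝ)+1) = g y * c₂ := by
    intro y
    simp only [hgdef, Nat.factorial_succ, Nat.cast_mul, Nat.cast_add, Nat.cast_one, pow_succ]
    field_simp
  have hck : c₂ * κm = κp := by
    rw [hc₂]; field_simp
  have bal1 : ∀ x y : ℕ, f (x+1) * g y * (((x:ℝ)+1) * (κ₁ + κ₃ * x))
      = f x * g (y+1) * (((y:ℝ)+1) * (κ₂ + κ₄ * x)) := by
    intro x y
    linear_combination g y * hfrec x - f x * (κ₂ + κ₄ * x) * hgrec y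
  have bal2 : ∀ y : ℕ, g (y+1) * (((y:ℝ)+1) * κm) = g y * κp := by
    intro y
    linear_combination κm * hgrec y + g y * hck
  refine ⟨hsum, ?_, ?_⟩
  · -- normalization
    have hπeq : ∀ p : ℕ × ℕ, π p.1 p.2 = μ p / S := by
      intro p
      rw [hπ]
      simp [Int.toNat_natCast, Int.natCast_nonneg]
    calc (∑' p : ℕ × ℕ, π p.1 p.2) = ∑' p : ℕ × ℕ, μ p / S := by
          exact tsum_congr hπeq
      _ = S / S := by rw [tsum_div_const]
      _ = 1 := div_self hS0
  · -- master equation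
    intro a b ha hb
    lift a to ℕ using ha with m
    lift b to ℕ using hb with n
    rcases m with _ | k <;> rcases n with _ | j
    · -- m = 0, n = 0
      have e1 : ((0:ℕ):ℤ) + 1 = ((1:ℕ):ℤ) := by omega
      have e2 : ((0:ℕ):ℤ) - 1 = (-1 : ℤ) := by omega
      rw [e1, e2, hπx, hπy, hπx, hπN, hπN]
      have B4 := bal2 0
      push_cast at B4 ⊢
      linear_combination (f 0 * B4) / S
    · -- m = 0, n = j+1
      have e1 : ((0:ℕ):ℤ) + 1 = ((1:ℕ):ℤ) := by omega
      have e2 : ((j+1:ℕ):ℤ) - 1 = ((j:ℕ):ℤ) := by omega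
      have e3 : ((0:ℕ):ℤ) - 1 = (-1 : ℤ) := by omega
      have e4 : ((j+1:ℕ):ℤ) + 1 = ((j+2:ℕ):ℤ) := by omega
      rw [e1, e2, e3, e4, hπy, hπN, hπN, hπN, hπN]
      have B1 := bal1 0 j
      have B3 := bal2 j
      have B4 := bal2 (j+1)
      push_cast at B1 B3 B4 ⊢
      linear_combination (B1 - f 0 * B3 + f 0 * B4) / S
    · -- m = k+1, n = 0
      have e1 : ((k+1:ℕ):ℤ) + 1 = ((k+2:ℕ):ℤ) := by omega
      have e2 : ((0:ℕ):ℤ) - 1 = (-1 : ℤ) := by omega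
      have e3 : ((k+1:ℕ):ℤ) - 1 = ((k:ℕ):ℤ) := by omega
      have e4 : ((0:ℕ):ℤ) + 1 = ((1:ℕ):ℤ) := by omega
      rw [e1, e2, e3, e4, hπx, hπx, hπN, hπN, hπN]
      have B2 := bal1 k 0
      have B4 := bal2 0
      push_cast at B2 B4 ⊢
      linear_combination (-B2 + f (k+1) * B4) / S
    · -- m = k+1, n = j+1
      have e1 : ((k+1:ℕ):ℤ) + 1 = ((k+2:ℕ):ℤ) := by omega
      have e2 : ((j+1:ℕ):ℤ) - 1 = ((j:ℕ):ℤ) := by omega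
      have e3 : ((k+1:ℕ):ℤ) - 1 = ((k:ℕ):ℤ) := by omega
      have e4 : ((j+1:ℕ):ℤ) + 1 = ((j+2:ℕ):ℤ) := by omega
      rw [e1, e2, e3, e4, hπN, hπN, hπN, hπN, hπN]
      have B1 := bal1 (k+1) j
      have B2 := bal1 k (j+1)
      have B3 := bal2 j
      have B4 := bal2 (j+1)
      push_cast at B1 B2 B3 B4 ⊢
      linear_combination (B1 - B2 - f (k+1) * B3 + f (k+1) * B4) / S
end

section
/- Consider the reaction network S₁ ⇌ S₂ (rates κ₁,κ₂) and 2S₁ ⇌ S₁+S₂ (rates κ₃,κ₄) with general kinetics: the intensity of a reaction with reactant ν is κ_{ν→ν'} ∏_i ∏_{j=0}^{ν_i−1} θ_i(x_i−j), where θ₁, θ₂: Z → R_{≥0} satisfy θ_i(x) = 0 iff x ≤ 0. Then on each irreducible component Γ_N = {x₁+x₂ = N}, the distribution π(x₁,x₂) = Z⁻¹ f₁(x₁) f₂(x₂) with f₁(x₁) = d^{x₁}/(∏_{l=1}^{x₁} θ₁(l)) · ∏_{l=1}^{x₁} (κ₂+κ₄θ₁(l−1))/(κ₁+κ₃θ₁(l−1))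 and f₂(x₂) = d^{x₂}/(∏_{l=1}^{x₂} θ₂(l)) (for any d > 0) is a stationary distribution. -/
/-- for the network `S₁ ⇌ S₂`, `2S₁ ⇌ S₁+S₂` with general kinetics given
by `θ₁, θ₂ : ℤ → ℝ_{≥0}` (with `θᵢ(x) = 0` iff `x ≤ 0`), the product-form distribution
with `f₁(x₁) = d^{x₁}/(∏_{l=1}^{x₁} θ₁(l)) ∏_{l=1}^{x₁}(κ₂+κ₄θ₁(l-1))/(κ₁+κ₃θ₁(l-1))`
and `f₂(x₂) = d^{x₂}/(∏_{l=1}^{x₂} θ₂(l))` is a stationary distribution on every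
irreducible component `Γ_N = {x₁ + x₂ = N}`. -/
theorem stmt16 (κ₁ κ₂ κ₃ κ₄ : ℝ) (h₁ : 0 < κ₁) (h₂ : 0 < κ₂) (h₃ : 0 < κ₃) (h₄ : 0 < κ₄)
    (θ₁ θ₂ : ℤ → ℝ)
    (hθ₁nn : ∀ z, 0 ≤ θ₁ z) (hθ₂nn : ∀ z, 0 ≤ θ₂ z)
    (hθ₁0 : ∀ z, θ₁ z = 0 ↔ z ≤ 0) (hθ₂0 : ∀ z, θ₂ z = 0 ↔ z ≤ 0)
    (d : ℝ) (hd : 0 < d) (N : ℕ)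
    (f₁ f₂ : ℕ → ℝ)
    (hf₁ : ∀ m : ℕ, f₁ m = d ^ m / (∏ l ∈ Finset.range m, θ₁ ((l : ℤ) + 1)) *
      ∏ l ∈ Finset.range m, (κ₂ + κ₄ * θ₁ (l : ℤ)) / (κ₁ + κ₃ * θ₁ (l : ℤ)))
    (hf₂ : ∀ m : ℕ, f₂ m = d ^ m / (∏ l ∈ Finset.range m, θ₂ ((l : ℤ) + 1)))
    (Z : ℝ) (hZ : Z = ∑ p ∈ Finset.range (N + 1), f₁ p * f₂ (N - p))
    (π : ℤ → ℤ → ℝ)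
    (hπ : ∀ a b : ℤ, π a b =
      if 0 ≤ a ∧ 0 ≤ b then Z⁻¹ * f₁ a.toNat * f₂ b.toNat else 0) :
    -- the master equation holds at every state of Γ_N
    (∀ a b : ℤ, 0 ≤ a → 0 ≤ b → a + b = (N : ℤ) →
      π (a + 1) (b - 1) * (κ₁ * θ₁ (a + 1) + κ₃ * (θ₁ (a + 1) * θ₁ a)) +
      π (a - 1) (b + 1) * (κ₂ * θ₂ (b + 1) + κ₄ * (θ₁ (a - 1) * θ₂ (b + 1))) =
      π a b * (κ₁ * θ₁ a + κ₃ * (θ₁ a * θ₁ (a - 1)) +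
        κ₂ * θ₂ b + κ₄ * (θ₁ a * θ₂ b))) ∧
    -- π is a probability distribution on Γ_N
    (∑ p ∈ Finset.range (N + 1), π p ((N : ℤ) - p)) = 1 := by
  -- positivity of θ's on positive integers
  have hθ₁pos : ∀ z : ℤ, 0 < z → 0 < θ₁ z := fun z hz =>
    lt_of_le_of_ne (hθ₁nn z) (fun h => absurd ((hθ₁0 z).mp h.symm) (by omega))
  have hθ₂pos : ∀ z : ℤ, 0 < z → 0 < θ₂ z := fun z hz =>
    lt_of_le_of_ne (hθ₂nn z) (fun h => absurd ((hθ₂0 z).mp h.symm) (by omega))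
  have hden : ∀ z : ℤ, 0 < κ₁ + κ₃ * θ₁ z :=
    fun z => add_pos_of_pos_of_nonneg h₁ (mul_nonneg h₃.le (hθ₁nn z))
  have hnum : ∀ z : ℤ, 0 < κ₂ + κ₄ * θ₁ z :=
    fun z => add_pos_of_pos_of_nonneg h₂ (mul_nonneg h₄.le (hθ₁nn z))
  -- positivity of f₁, f₂
  have hprod₁ : ∀ m : ℕ, 0 < ∏ l ∈ Finset.range m, θ₁ ((l : ℤ) + 1) := by
    intro m
    exact Finset.prod_pos fun l _ => hθ₁pos _ (by positivity)
  have hprod₂ : ∀ m : ℕ, 0 < ∏ l ∈ Finset.range m, θ₂ ((l : ℤ) + 1) := by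
    intro m
    exact Finset.prod_pos fun l _ => hθ₂pos _ (by positivity)
  have hf₁pos : ∀ m : ℕ, 0 < f₁ m := by
    intro m
    rw [hf₁]
    exact mul_pos (div_pos (pow_pos hd m) (hprod₁ m))
      (Finset.prod_pos fun l _ => div_pos (hnum l) (hden l))
  have hf₂pos : ∀ m : ℕ, 0 < f₂ m := by
    intro m
    rw [hf₂]
    exact div_pos (pow_pos hd m) (hprod₂ m)
  have hZpos : 0 < Z := by
    rw [hZ]
    exact Finset.sum_pos (fun p _ => mul_pos (hf₁pos p) (hf₂pos _)) ⟨0, by simp⟩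
  -- recursions
  have hrec₁ : ∀ m : ℕ, f₁ (m + 1) * θ₁ ((m : ℤ) + 1) * (κ₁ + κ₃ * θ₁ (m : ℤ)) =
      f₁ m * d * (κ₂ + κ₄ * θ₁ (m : ℤ)) := by
    intro m
    have hne2 : θ₁ ((m : ℤ) + 1) ≠ 0 := (hθ₁pos _ (by positivity)).ne'
    have hne3 : κ₁ + κ₃ * θ₁ (m : ℤ) ≠ 0 := (hden m).ne'
    have step : f₁ (m + 1) = f₁ m * d / θ₁ ((m : ℤ) + 1) *
        ((κ₂ + κ₄ * θ₁ (m : ℤ)) / (κ₁ + κ₃ * θ₁ (m : ℤ))) := by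
      rw [hf₁ (m + 1), hf₁ m, Finset.prod_range_succ, Finset.prod_range_succ, pow_succ]
      ring
    rw [step]
    rw [div_mul_div_comm, div_mul_eq_mul_div, div_mul_eq_mul_div,
      div_eq_iff (mul_ne_zero hne2 hne3)]
    ring
  have hrec₂ : ∀ m : ℕ, f₂ (m + 1) * θ₂ ((m : ℤ) + 1) = f₂ m * d := by
    intro m
    have hne2 : θ₂ ((m : ℤ) + 1) ≠ 0 := (hθ₂pos _ (by positivity)).ne'
    have step : f₂ (m + 1) = f₂ m * d / θ₂ ((m : ℤ) + 1) := by
      rw [hf₂ (m + 1), hf₂ m, Finset.prod_range_succ, pow_succ]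
      ring
    rw [step]
    field_simp
  -- detailed balance
  have B : ∀ a b : ℤ, 0 ≤ a → 0 ≤ b →
      π (a + 1) (b - 1) * (θ₁ (a + 1) * (κ₁ + κ₃ * θ₁ a)) =
      π a b * (θ₂ b * (κ₂ + κ₄ * θ₁ a)) := by
    intro a b ha hb
    rcases eq_or_lt_of_le hb with hb0 | hb1
    · -- b = 0
      have hθb : θ₂ b = 0 := (hθ₂0 b).mpr (le_of_eq hb0.symm)
      have hπ0 : π (a + 1) (b - 1) = 0 := by
        rw [hπ]
        rw [if_neg]
        rintro ⟨-, h⟩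
        omega
      rw [hπ0, hθb]
      ring
    · -- b ≥ 1
      lift a to ℕ using ha with m
      lift b to ℕ using hb with n
      obtain ⟨k, rfl⟩ : ∃ k, n = k + 1 := ⟨n - 1, by omega⟩
      have e1 : π ((m : ℤ) + 1) ((((k + 1 : ℕ)) : ℤ) - 1) = Z⁻¹ * f₁ (m + 1) * f₂ k := by
        rw [hπ, if_pos ⟨by positivity, by omega⟩,
          show ((m : ℤ) + 1).toNat = m + 1 by omega,
          show ((((k + 1 : ℕ)) : ℤ) - 1).toNat = k by omega]
      have e2 : π (m : ℤ) (((k + 1 : ℕ)) : ℤ) = Z⁻¹ * f₁ m * f₂ (k + 1) := by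
        rw [hπ, if_pos ⟨by positivity, by positivity⟩,
          show ((m : ℤ)).toNat = m by omega, show ((((k + 1 : ℕ)) : ℤ)).toNat = k + 1 by omega]
      rw [e1, e2]
      push_cast
      linear_combination (Z⁻¹ * f₂ k) * hrec₁ m -
        (Z⁻¹ * f₁ m * (κ₂ + κ₄ * θ₁ (m : ℤ))) * hrec₂ k
  constructor
  · -- master equation
    intro a b ha hb hab
    have key1 := B a b ha hb
    rcases eq_or_lt_of_le ha with ha0 | ha1
    · -- a = 0
      have hθa : θ₁ a = 0 := (hθ₁0 a).mpr (le_of_eq ha0.symm)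
      have hθa' : θ₁ (a - 1) = 0 := (hθ₁0 _).mpr (by omega)
      have hπm : π (a - 1) (b + 1) = 0 := by
        rw [hπ, if_neg]
        rintro ⟨h, -⟩
        omega
      rw [hπm, hθa']
      linear_combination key1 - (κ₁ * π a b) * hθa
    · -- a ≥ 1
      have key2 := B (a - 1) (b + 1) (by omega) (by omega)
      rw [show a - 1 + 1 = a by ring, show b + 1 - 1 = b by ring] at key2
      linear_combination key1 - key2
  · -- normalization
    have hsum : ∀ p ∈ Finset.range (N + 1),
        π (p : ℤ) ((N : ℤ) - p) = Z⁻¹ * (f₁ p * f₂ (N - p)) := by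
      intro p hp
      rw [Finset.mem_range] at hp
      rw [hπ, if_pos ⟨by positivity, by omega⟩]
      rw [show ((p : ℤ)).toNat = p by omega, show ((N : ℤ) - p).toNat = N - p by omega]
      ring
    rw [Finset.sum_congr rfl hsum, ← Finset.mul_sum, ← hZ]
    exact inv_mul_cancel₀ hZpos.ne'
end
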